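/- Let Z : [1,∞) → ℝ^k be a C² function satisfying Z''(t) = A(t)Z'(t) + B(t)Z(t) with |A(t)| + t|B(t)| ≤ C₁ t^(−1−q) for constants C₁ > 0, q > 0. If Z vanishes to infinite order at infinity (i.e. for every N > 0 there exists c_N with |Z(t)| ≤ c_N t^(−N) for all t ≥ 1), then Z is identically zero on [1,∞). -/

import Mathlib

open Set Filter intervalIntegral

/-- For `σ ∈ [t, 2t]`, `σ^e ≤ 2^|e| * t^e`. -/
lemma aux_rpow_interval {t σ e : ℝ} (ht : 1 ≤ t) (h1 : t ≤ σ) (h2 : σ ≤ 2 * t) :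
    σ ^ e ≤ 2 ^ |e| * t ^ e := by
  have ht0 : 0 < t := lt_of_lt_of_le one_pos ht
  have hσ0 : 0 < σ := lt_of_lt_of_le ht0 h1
  have hratio1 : 1 ≤ σ / t := (one_le_div ht0).2 h1
  have hratio2 : σ / t ≤ 2 := (div_le_iff₀ ht0).2 h2
  have hσeq : σ = σ / t * t := by field_simp
  have key : (σ / t) ^ e ≤ 2 ^ |e| := by
    rcases le_or_gt 0 e with he | he
    · calc (σ / t) ^ e ≤ 2 ^ e := Real.rpow_le_rpow (by positivity) hratio2 he
        _ ≤ 2 ^ |e| := Real.rpow_le_rpow_of_exponent_le one_le_two (le_abs_self e)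
    · calc (σ / t) ^ e ≤ 1 := Real.rpow_le_one_of_one_le_of_nonpos hratio1 he.le
        _ ≤ 2 ^ |e| := Real.one_le_rpow one_le_two (abs_nonneg e)
  calc σ ^ e = (σ / t) ^ e * t ^ e := by
        rw [← Real.mul_rpow (by positivity) ht0.le, div_mul_cancel₀ _ ht0.ne']
    _ ≤ 2 ^ |e| * t ^ e := by
        have := Real.rpow_nonneg ht0.le e
        exact mul_le_mul_of_nonneg_right key this

lemma aux_arith1 (a b t C₁ i1 i2 : ℝ) (ht0 : 0 < t) (ha0 : 0 ≤ a) (hb0 : 0 ≤ b)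
    (hC₁ : 0 < C₁)
    (h1a : -(a * b) ≤ i1) (h1b : i1 ≤ a * b)
    (p2 : t ^ 3 * i2 ≤ C₁ * t ^ 2 * b ^ 2 + C₁ * t * (a * b))
    (p2' : -(C₁ * t ^ 2 * b ^ 2 + C₁ * t * (a * b)) ≤ t ^ 3 * i2) :
    2 * i1 * t + 2 * t ^ 2 * b ^ 2 + 2 * (t ^ 3 * i2) ≤ (3 + 3 * C₁) * (a ^ 2 + t ^ 2 * b ^ 2)
    ∧ -((3 + 3 * C₁) * (a ^ 2 + t ^ 2 * b ^ 2)) ≤ 2 * i1 * t + 2 * t ^ 2 * b ^ 2 + 2 * (t ^ 3 * i2) := by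
  constructor
  · nlinarith [mul_le_mul_of_nonneg_right h1b ht0.le, sq_nonneg (a - t * b), p2,
      mul_nonneg hC₁.le (sq_nonneg (a - t * b)), sq_nonneg a,
      mul_nonneg hC₁.le (sq_nonneg a), sq_nonneg (t * b),
      mul_nonneg hC₁.le (sq_nonneg (t * b))]
  · nlinarith [mul_le_mul_of_nonneg_right h1a ht0.le, sq_nonneg (a - t * b), p2',
      mul_nonneg hC₁.le (sq_nonneg (a - t * b)), sq_nonneg a,
      mul_nonneg hC₁.le (sq_nonneg a), sq_nonneg (t * b),
      mul_nonneg hC₁.le (sq_nonneg (t * b))]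

theorem stmt_1 (k : ℕ) (Z Z' Z'' : ℝ → EuclideanSpace ℝ (Fin k))
    (A B : ℝ → (EuclideanSpace ℝ (Fin k) →L[ℝ] EuclideanSpace ℝ (Fin k)))
    (C₁ q : ℝ) (hC₁ : 0 < C₁) (hq : 0 < q)
    (hA : ContinuousOn A (Set.Ici 1)) (hB : ContinuousOn B (Set.Ici 1))
    (hZ'cont : ContinuousOn Z' (Set.Ici 1)) (hZ''cont : ContinuousOn Z'' (Set.Ici 1))
    (hderiv1 : ∀ t ∈ Set.Ici (1:ℝ), HasDerivWithinAt Z (Z' t) (Set.Ici 1) t)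
    (hderiv2 : ∀ t ∈ Set.Ici (1:ℝ), HasDerivWithinAt Z' (Z'' t) (Set.Ici 1) t)
    (hode : ∀ t ∈ Set.Ici (1:ℝ), Z'' t = A t (Z' t) + B t (Z t))
    (hbound : ∀ t ∈ Set.Ici (1:ℝ), ‖A t‖ + t * ‖B t‖ ≤ C₁ * t ^ (-1 - q))
    (hvanish : ∀ N : ℝ, 0 < N → ∃ c : ℝ, ∀ t ∈ Set.Ici (1:ℝ), ‖Z t‖ ≤ c * t ^ (-N)) :
    ∀ t ∈ Set.Ici (1:ℝ), Z t = 0 := by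
  -- basic facts
  have hZcont : ContinuousOn Z (Set.Ici 1) := fun t ht => (hderiv1 t ht).continuousWithinAt
  -- pointwise bound on Z''
  have hApt : ∀ t ∈ Set.Ici (1:ℝ), ‖A t‖ ≤ C₁ * t ^ (-1 - q) := by
    intro t ht
    have h := hbound t ht
    have ht0 : (0:ℝ) < t := lt_of_lt_of_le one_pos ht
    nlinarith [norm_nonneg (B t), mul_nonneg ht0.le (norm_nonneg (B t))]
  have hBpt : ∀ t ∈ Set.Ici (1:ℝ), ‖B t‖ ≤ C₁ * t ^ (-2 - q) := by
    intro t ht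
    have h := hbound t ht
    have ht0 : (0:ℝ) < t := lt_of_lt_of_le one_pos ht
    have h2 : t * ‖B t‖ ≤ C₁ * t ^ (-1 - q) := by nlinarith [norm_nonneg (A t)]
    have e : t ^ (-2 - q : ℝ) * t = t ^ (-1 - q : ℝ) := by
      rw [← Real.rpow_add_one ht0.ne']; ring_nf
    rw [← e] at h2
    refine (mul_le_mul_iff_right₀ ht0).1 ?_
    calc t * ‖B t‖ ≤ C₁ * (t ^ (-2 - q) * t) := h2
      _ = t * (C₁ * t ^ (-2 - q)) := by ring
  have hZ''bd : ∀ t ∈ Set.Ici (1:ℝ),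
      ‖Z'' t‖ ≤ C₁ * t ^ (-1 - q) * ‖Z' t‖ + C₁ * t ^ (-2 - q) * ‖Z t‖ := by
    intro t ht
    calc ‖Z'' t‖ = ‖A t (Z' t) + B t (Z t)‖ := by rw [hode t ht]
      _ ≤ ‖A t (Z' t)‖ + ‖B t (Z t)‖ := norm_add_le _ _
      _ ≤ ‖A t‖ * ‖Z' t‖ + ‖B t‖ * ‖Z t‖ :=
          add_le_add ((A t).le_opNorm _) ((B t).le_opNorm _)
      _ ≤ C₁ * t ^ (-1 - q) * ‖Z' t‖ + C₁ * t ^ (-2 - q) * ‖Z t‖ := by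
          gcongr <;> [exact hApt t ht; exact hBpt t ht]
  -- the energy F and its derivative bound
  set K : ℝ := 3 + 3 * C₁ with hK
  have hK3 : 3 ≤ K := by nlinarith
  set F : ℝ → ℝ := fun t => ‖Z t‖ ^ 2 + t ^ 2 * ‖Z' t‖ ^ 2 with hF
  set F' : ℝ → ℝ := fun t => 2 * inner ℝ (Z t) (Z' t) + (2 * t * ‖Z' t‖ ^ 2
      + t ^ 2 * (2 * inner ℝ (Z' t) (Z'' t))) with hF'
  have hFderiv : ∀ t ∈ Set.Ici (1:ℝ), HasDerivWithinAt F (F' t) (Set.Ici 1) t := by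
    intro t ht
    have hZZ := HasDerivWithinAt.inner ℝ (hderiv1 t ht) (hderiv1 t ht)
    have hZ'Z' := HasDerivWithinAt.inner ℝ (hderiv2 t ht) (hderiv2 t ht)
    have hsq : HasDerivWithinAt (fun s : ℝ => s ^ 2) (2 * t) (Set.Ici 1) t := by
      simpa using (hasDerivAt_pow 2 t).hasDerivWithinAt
    have hsum := hZZ.add (hsq.mul hZ'Z')
    have hFeq : F = fun s => (inner ℝ (Z s) (Z s) : ℝ) + s ^ 2 * inner ℝ (Z' s) (Z' s) := by
      funext s; simp only [hF, real_inner_self_eq_norm_sq]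
    rw [hFeq]
    refine HasDerivWithinAt.congr_deriv hsum ?_
    have e1 : (inner ℝ (Z' t) (Z t) : ℝ) = inner ℝ (Z t) (Z' t) := real_inner_comm _ _
    have e2 : (inner ℝ (Z'' t) (Z' t) : ℝ) = inner ℝ (Z' t) (Z'' t) := real_inner_comm _ _
    have e3 : (inner ℝ (Z' t) (Z' t) : ℝ) = ‖Z' t‖ ^ 2 := real_inner_self_eq_norm_sq _
    simp only [hF', e1, e2, e3]
    ring
  have hFnonneg : ∀ t, 0 ≤ F t := by
    intro t; positivity
  have hF'bd : ∀ t ∈ Set.Ici (1:ℝ), F' t * t ≤ K * F t ∧ -(K * F t) ≤ F' t * t := by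
    intro t ht
    have ht1 : (1:ℝ) ≤ t := ht
    have ht0 : (0:ℝ) < t := lt_of_lt_of_le one_pos ht
    set a := ‖Z t‖ with ha
    set b := ‖Z' t‖ with hb
    have ha0 : 0 ≤ a := norm_nonneg _
    have hb0 : 0 ≤ b := norm_nonneg _
    have hr1 : t ^ (-1 - q : ℝ) * t ≤ 1 := by
      have : t ^ (-1 - q : ℝ) * t = t ^ (-q : ℝ) := by
        rw [← Real.rpow_add_one ht0.ne']; ring_nf
      rw [this]
      exact Real.rpow_le_one_of_one_le_of_nonpos ht1 (by linarith)
    have hr2 : t ^ (-2 - q : ℝ) * (t * t) ≤ 1 := by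
      have : t ^ (-2 - q : ℝ) * (t * t) = t ^ (-q : ℝ) := by
        rw [show t * t = t ^ (2:ℕ) by ring, ← Real.rpow_natCast t 2, ← Real.rpow_add ht0]
        ring_nf
      rw [this]
      exact Real.rpow_le_one_of_one_le_of_nonpos ht1 (by linarith)
    have hu0 : 0 ≤ t ^ (-1 - q : ℝ) := Real.rpow_nonneg ht0.le _
    have hv0 : 0 ≤ t ^ (-2 - q : ℝ) := Real.rpow_nonneg ht0.le _
    have h5 : t ^ 3 * ‖Z'' t‖ ≤ C₁ * t ^ 2 * b + C₁ * t * a := by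
      calc t ^ 3 * ‖Z'' t‖ ≤ t ^ 3 * (C₁ * t ^ (-1 - q) * b + C₁ * t ^ (-2 - q) * a) :=
            mul_le_mul_of_nonneg_left (hZ''bd t ht) (by positivity)
        _ = C₁ * (t ^ (-1 - q : ℝ) * t) * (t ^ 2 * b) + C₁ * (t ^ (-2 - q : ℝ) * (t * t)) * (t * a) := by
            ring
        _ ≤ C₁ * 1 * (t ^ 2 * b) + C₁ * 1 * (t * a) := by
            gcongr <;> positivity
        _ = C₁ * t ^ 2 * b + C₁ * t * a := by ring
    obtain ⟨h1a, h1b⟩ := abs_le.1 (abs_real_inner_le_norm (Z t) (Z' t))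
    obtain ⟨h2a, h2b⟩ := abs_le.1 (abs_real_inner_le_norm (Z' t) (Z'' t))
    set i1 : ℝ := inner ℝ (Z t) (Z' t) with hi1
    set i2 : ℝ := inner ℝ (Z' t) (Z'' t) with hi2
    set w : ℝ := ‖Z'' t‖ with hw
    have p2 : t ^ 3 * (inner ℝ (Z' t) (Z'' t) : ℝ) ≤ C₁ * t ^ 2 * b ^ 2 + C₁ * t * (a * b) := by
      calc t ^ 3 * (inner ℝ (Z' t) (Z'' t) : ℝ) ≤ t ^ 3 * (b * ‖Z'' t‖) :=
            mul_le_mul_of_nonneg_left h2b (by positivity)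
        _ = b * (t ^ 3 * ‖Z'' t‖) := by ring
        _ ≤ b * (C₁ * t ^ 2 * b + C₁ * t * a) := mul_le_mul_of_nonneg_left h5 hb0
        _ = C₁ * t ^ 2 * b ^ 2 + C₁ * t * (a * b) := by ring
    have p2' : -(C₁ * t ^ 2 * b ^ 2 + C₁ * t * (a * b)) ≤ t ^ 3 * (inner ℝ (Z' t) (Z'' t) : ℝ) := by
      have : -(t ^ 3 * (b * ‖Z'' t‖)) ≤ t ^ 3 * (inner ℝ (Z' t) (Z'' t) : ℝ) := by
        have := mul_le_mul_of_nonneg_left h2a (by positivity : (0:ℝ) ≤ t ^ 3)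
        linarith [this]
      refine le_trans ?_ this
      have : b * (t ^ 3 * ‖Z'' t‖) ≤ C₁ * t ^ 2 * b ^ 2 + C₁ * t * (a * b) := by
        calc b * (t ^ 3 * ‖Z'' t‖) ≤ b * (C₁ * t ^ 2 * b + C₁ * t * a) :=
              mul_le_mul_of_nonneg_left h5 hb0
          _ = C₁ * t ^ 2 * b ^ 2 + C₁ * t * (a * b) := by ring
      nlinarith [this]
    have hF'eq : F' t * t = 2 * (inner ℝ (Z t) (Z' t) : ℝ) * t + 2 * t ^ 2 * b ^ 2
        + 2 * (t ^ 3 * (inner ℝ (Z' t) (Z'' t) : ℝ)) := by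
      simp only [hF']; ring
    have hFval : F t = a ^ 2 + t ^ 2 * b ^ 2 := rfl
    have harith := aux_arith1 a b t C₁ i1 i2 ht0 ha0 hb0 hC₁ h1a h1b p2 p2'
    constructor
    · rw [hF'eq, hFval, hK]; exact harith.1
    · rw [hF'eq, hFval, hK]; exact harith.2
  -- monotonicity of weighted energies
  have hFcont : ContinuousOn F (Set.Ici 1) := fun t ht => (hFderiv t ht).continuousWithinAt
  have hGderiv : ∀ e : ℝ, ∀ x : ℝ, 1 < x →
      HasDerivAt (fun s : ℝ => s ^ e * F s) (e * x ^ (e - 1) * F x + x ^ e * F' x) x := by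
    intro e x hx
    have hx0 : (0:ℝ) < x := lt_trans one_pos hx
    exact (Real.hasDerivAt_rpow_const (Or.inl hx0.ne')).mul
      ((hFderiv x hx.le).hasDerivAt (Ici_mem_nhds hx))
  have hGcont : ∀ e : ℝ, ContinuousOn (fun s : ℝ => s ^ e * F s) (Set.Ici 1) := by
    intro e
    refine ContinuousOn.mul ?_ hFcont
    exact fun x hx => (Real.continuousAt_rpow_const x e
      (Or.inl (ne_of_gt (lt_of_lt_of_le one_pos hx)))).continuousWithinAt
  have hmono_up : ∀ t₁ ∈ Set.Ici (1:ℝ), ∀ t₂ ∈ Set.Ici (1:ℝ), t₁ ≤ t₂ →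
      t₁ ^ K * F t₁ ≤ t₂ ^ K * F t₂ := by
    have := monotoneOn_of_deriv_nonneg (convex_Ici (1:ℝ)) (hGcont K) ?_ ?_
    · exact fun t₁ h1 t₂ h2 h12 => this h1 h2 h12
    · rw [interior_Ici]
      exact fun x hx => ((hGderiv K x hx).differentiableAt).differentiableWithinAt
    · rw [interior_Ici]
      intro x hx
      rw [(hGderiv K x hx).deriv]
      have hx0 : (0:ℝ) < x := lt_trans one_pos hx
      have e : x ^ K = x ^ (K - 1 : ℝ) * x := by
        rw [← Real.rpow_add_one hx0.ne']; ring_nf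
      have hb := (hF'bd x (le_of_lt hx : (1:ℝ) ≤ x)).2
      calc (0:ℝ) ≤ x ^ (K - 1 : ℝ) * (K * F x + F' x * x) := by
            have := Real.rpow_nonneg hx0.le (K - 1)
            nlinarith [hb]
        _ = K * x ^ (K - 1 : ℝ) * F x + x ^ K * F' x := by rw [e]; ring
  have hmono_dn : ∀ t₁ ∈ Set.Ici (1:ℝ), ∀ t₂ ∈ Set.Ici (1:ℝ), t₁ ≤ t₂ →
      t₂ ^ (-K) * F t₂ ≤ t₁ ^ (-K) * F t₁ := by
    have := antitoneOn_of_deriv_nonpos (convex_Ici (1:ℝ)) (hGcont (-K)) ?_ ?_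
    · exact fun t₁ h1 t₂ h2 h12 => this h1 h2 h12
    · rw [interior_Ici]
      exact fun x hx => ((hGderiv (-K) x hx).differentiableAt).differentiableWithinAt
    · rw [interior_Ici]
      intro x hx
      rw [(hGderiv (-K) x hx).deriv]
      have hx0 : (0:ℝ) < x := lt_trans one_pos hx
      have e : x ^ (-K:ℝ) = x ^ (-K - 1 : ℝ) * x := by
        rw [← Real.rpow_add_one hx0.ne']; ring_nf
      have hb := (hF'bd x (le_of_lt hx : (1:ℝ) ≤ x)).1
      calc -K * x ^ (-K - 1 : ℝ) * F x + x ^ (-K:ℝ) * F' x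
          = x ^ (-K - 1 : ℝ) * (F' x * x - K * F x) := by rw [e]; ring
        _ ≤ 0 := by
            have := Real.rpow_nonneg hx0.le (-K - 1)
            nlinarith [hb]
  -- initial polynomial bound on Z'
  have hinit : ∃ M : ℝ, 0 ≤ M ∧ ∀ t ∈ Set.Ici (1:ℝ), ‖Z' t‖ ≤ M * t ^ ((K - 2) / 2) := by
    refine ⟨Real.sqrt (F 1), Real.sqrt_nonneg _, fun t ht => ?_⟩
    have ht1 : (1:ℝ) ≤ t := ht
    have ht0 : (0:ℝ) < t := lt_of_lt_of_le one_pos ht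
    have h1 := hmono_dn 1 Set.self_mem_Ici t ht ht1
    rw [Real.one_rpow, one_mul] at h1
    -- F t ≤ F 1 * t ^ K
    have h2 : F t ≤ F 1 * t ^ K := by
      have hpos : (0:ℝ) < t ^ K := Real.rpow_pos_of_pos ht0 K
      have := mul_le_mul_of_nonneg_left h1 hpos.le
      calc F t = t ^ K * (t ^ (-K:ℝ) * F t) := by
            rw [← mul_assoc, ← Real.rpow_add ht0]; simp
        _ ≤ t ^ K * F 1 := this
        _ = F 1 * t ^ K := mul_comm _ _
    have h3 : ‖Z' t‖ ^ 2 ≤ F 1 * t ^ (K - 2 : ℝ) := by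
      have e : t ^ K = t ^ (K - 2 : ℝ) * t ^ 2 := by
        rw [show t ^ 2 = t ^ ((2:ℕ):ℝ) by rw [Real.rpow_natCast], ← Real.rpow_add ht0]
        norm_num
      have h4 : t ^ 2 * ‖Z' t‖ ^ 2 ≤ F 1 * t ^ (K - 2 : ℝ) * t ^ 2 := by
        have hFt : t ^ 2 * ‖Z' t‖ ^ 2 ≤ F t := by
          have : (0:ℝ) ≤ ‖Z t‖ ^ 2 := sq_nonneg _
          simp only [hF]; linarith
        calc t ^ 2 * ‖Z' t‖ ^ 2 ≤ F t := hFt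
          _ ≤ F 1 * t ^ K := h2
          _ = F 1 * t ^ (K - 2 : ℝ) * t ^ 2 := by rw [e]; ring
      have hp2 : (0:ℝ) < t ^ 2 := by positivity
      nlinarith [h4, hp2]
    calc ‖Z' t‖ = Real.sqrt (‖Z' t‖ ^ 2) := (Real.sqrt_sq (norm_nonneg _)).symm
      _ ≤ Real.sqrt (F 1 * t ^ (K - 2 : ℝ)) := Real.sqrt_le_sqrt h3
      _ = Real.sqrt (F 1) * t ^ ((K - 2) / 2 : ℝ) := by
          rw [Real.sqrt_mul (hFnonneg 1)]
          congr 1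
          rw [Real.sqrt_eq_rpow, ← Real.rpow_mul ht0.le]
          ring_nf
  -- FTC helper
  have hFTC : ∀ (W W' : ℝ → EuclideanSpace ℝ (Fin k)), ContinuousOn W' (Set.Ici 1) →
      (∀ t ∈ Set.Ici (1:ℝ), HasDerivWithinAt W (W' t) (Set.Ici 1) t) →
      ∀ t₁ t₂ : ℝ, 1 ≤ t₁ → t₁ ≤ t₂ → (∫ s in t₁..t₂, W' s) = W t₂ - W t₁ := by
    intro W W' hW'c hWd t₁ t₂ h1 h12
    apply intervalIntegral.integral_eq_sub_of_hasDeriv_right_of_le h12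
    · intro s hs
      exact ((hWd s (le_trans h1 hs.1)).continuousWithinAt).mono
        (fun x hx => le_trans h1 hx.1)
    · intro x hx
      have hx1 : 1 < x := lt_of_le_of_lt h1 hx.1
      exact ((hWd x hx1.le).hasDerivAt (Ici_mem_nhds hx1)).hasDerivWithinAt
    · refine (hW'c.mono ?_).intervalIntegrable
      rw [uIcc_of_le h12]
      exact fun x hx => le_trans h1 hx.1
  -- bootstrap step
  have hstep : ∀ m M : ℝ, 0 ≤ M → (∀ s ∈ Set.Ici (1:ℝ), ‖Z' s‖ ≤ M * s ^ m) →
      ∃ M' : ℝ, 0 ≤ M' ∧ ∀ t ∈ Set.Ici (1:ℝ), ‖Z' t‖ ≤ M' * t ^ (m - q) := by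
    intro m M hM0 hZ'dec
    set N : ℝ := |m| + q + 2 with hNdef
    have hN0 : 0 < N := by have := abs_nonneg m; rw [hNdef]; linarith
    obtain ⟨c, hc⟩ := hvanish N hN0
    have hc0 : 0 ≤ c := by
      have h := hc 1 Set.self_mem_Ici
      rw [Real.one_rpow, mul_one] at h
      exact le_trans (norm_nonneg _) h
    set D : ℝ := C₁ * (M * 2 ^ |m - 1 - q| + c) with hDdef
    have hD0 : 0 ≤ D := by
      have h2p : (0:ℝ) ≤ 2 ^ |m - 1 - q| := Real.rpow_nonneg (by norm_num) _
      rw [hDdef]; positivity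
    refine ⟨2 * c + D, by positivity, fun t ht => ?_⟩
    have ht1 : (1:ℝ) ≤ t := ht
    have ht0 : (0:ℝ) < t := lt_of_lt_of_le one_pos ht
    -- uniform bound for Z'' on [t, 2t]
    have hZ''sup : ∀ σ ∈ Set.Icc t (2 * t), ‖Z'' σ‖ ≤ D * t ^ (m - 1 - q) := by
      intro σ hσ
      have hσ1 : (1:ℝ) ≤ σ := le_trans ht1 hσ.1
      have hσ0 : (0:ℝ) < σ := lt_of_lt_of_le one_pos hσ1
      have e1 : σ ^ (-1 - q : ℝ) * σ ^ m = σ ^ (m - 1 - q : ℝ) := by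
        rw [← Real.rpow_add hσ0]; ring_nf
      have e2 : σ ^ (-2 - q : ℝ) * σ ^ (-N : ℝ) = σ ^ (-2 - q - N : ℝ) := by
        rw [← Real.rpow_add hσ0]; ring_nf
      have b1 : σ ^ (m - 1 - q : ℝ) ≤ 2 ^ |m - 1 - q| * t ^ (m - 1 - q) :=
        aux_rpow_interval ht1 hσ.1 hσ.2
      have b2 : σ ^ (-2 - q - N : ℝ) ≤ t ^ (m - 1 - q : ℝ) := by
        have habs := abs_nonneg m
        have habs2 := neg_abs_le m
        calc σ ^ (-2 - q - N : ℝ) ≤ t ^ (-2 - q - N : ℝ) :=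
              Real.rpow_le_rpow_of_nonpos ht0 hσ.1 (by rw [hNdef]; linarith)
          _ ≤ t ^ (m - 1 - q : ℝ) :=
              Real.rpow_le_rpow_of_exponent_le ht1 (by rw [hNdef]; linarith)
      calc ‖Z'' σ‖ ≤ C₁ * σ ^ (-1 - q) * ‖Z' σ‖ + C₁ * σ ^ (-2 - q) * ‖Z σ‖ :=
            hZ''bd σ hσ1
        _ ≤ C₁ * σ ^ (-1 - q) * (M * σ ^ m) + C₁ * σ ^ (-2 - q) * (c * σ ^ (-N:ℝ)) := by
            have k1 : (0:ℝ) ≤ C₁ * σ ^ (-1 - q : ℝ) :=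
              mul_nonneg hC₁.le (Real.rpow_nonneg hσ0.le _)
            have k2 : (0:ℝ) ≤ C₁ * σ ^ (-2 - q : ℝ) :=
              mul_nonneg hC₁.le (Real.rpow_nonneg hσ0.le _)
            exact add_le_add (mul_le_mul_of_nonneg_left (hZ'dec σ hσ1) k1)
              (mul_le_mul_of_nonneg_left (hc σ hσ1) k2)
        _ = C₁ * M * (σ ^ (-1 - q : ℝ) * σ ^ m) + C₁ * c * (σ ^ (-2 - q : ℝ) * σ ^ (-N:ℝ)) := by
            ring
        _ = C₁ * M * σ ^ (m - 1 - q : ℝ) + C₁ * c * σ ^ (-2 - q - N : ℝ) := by rw [e1, e2]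
        _ ≤ C₁ * M * (2 ^ |m - 1 - q| * t ^ (m - 1 - q)) + C₁ * c * t ^ (m - 1 - q : ℝ) := by
            exact add_le_add (mul_le_mul_of_nonneg_left b1 (mul_nonneg hC₁.le hM0))
              (mul_le_mul_of_nonneg_left b2 (mul_nonneg hC₁.le hc0))
        _ = D * t ^ (m - 1 - q) := by rw [hDdef]; ring
    -- increment bound for Z'
    have hZ'diff : ∀ s ∈ Set.Icc t (2 * t), ‖Z' s - Z' t‖ ≤ D * t ^ (m - 1 - q) * t := by
      intro s hs
      have h12 : t ≤ s := hs.1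
      have hint := hFTC Z' Z'' hZ''cont hderiv2 t s ht1 h12
      rw [← hint]
      have hb : ‖∫ σ in t..s, Z'' σ‖ ≤ D * t ^ (m - 1 - q) * |s - t| := by
        refine intervalIntegral.norm_integral_le_of_norm_le_const ?_
        intro σ hσ
        rw [Set.uIoc_of_le h12] at hσ
        exact hZ''sup σ ⟨hσ.1.le, le_trans hσ.2 hs.2⟩
      refine le_trans hb ?_
      have habs : |s - t| ≤ t := by
        rw [abs_of_nonneg (by linarith)]
        linarith [hs.2]
      have hDt : (0:ℝ) ≤ D * t ^ (m - 1 - q) :=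
        mul_nonneg hD0 (Real.rpow_nonneg ht0.le _)
      exact mul_le_mul_of_nonneg_left habs hDt
    -- main identity
    have h2t : (1:ℝ) ≤ 2 * t := by linarith
    have ht2t : t ≤ 2 * t := by linarith
    have hIccIci : Set.uIcc t (2 * t) ⊆ Set.Ici (1:ℝ) := by
      rw [uIcc_of_le ht2t]; exact fun x hx => le_trans ht1 hx.1
    have hint1 : IntervalIntegrable Z' MeasureTheory.volume t (2 * t) :=
      (hZ'cont.mono hIccIci).intervalIntegrable
    have hint2 : IntervalIntegrable (fun _ : ℝ => Z' t) MeasureTheory.volume t (2 * t) :=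
      intervalIntegrable_const
    have hid : (∫ s in t..(2 * t), (Z' s - Z' t)) = (Z (2 * t) - Z t) - t • Z' t := by
      rw [intervalIntegral.integral_sub hint1 hint2,
        hFTC Z Z' hZ'cont hderiv1 t (2 * t) ht1 ht2t, intervalIntegral.integral_const]
      congr 1
      congr 1
      ring
    have hnorm : ‖∫ s in t..(2 * t), (Z' s - Z' t)‖ ≤ D * t ^ (m - 1 - q) * t * t := by
      have hb : ‖∫ s in t..(2 * t), (Z' s - Z' t)‖ ≤ (D * t ^ (m - 1 - q) * t) * |2 * t - t| := by
        refine intervalIntegral.norm_integral_le_of_norm_le_const ?_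
        intro s hs
        rw [Set.uIoc_of_le ht2t] at hs
        exact hZ'diff s ⟨hs.1.le, hs.2⟩
      refine le_trans hb ?_
      have : |2 * t - t| = t := by rw [abs_of_nonneg (by linarith)]; ring
      rw [this]
    -- put bounds together
    have hsmul : t * ‖Z' t‖ ≤ ‖Z (2 * t)‖ + ‖Z t‖ + D * t ^ (m - 1 - q) * t * t := by
      have hrw : t • Z' t = (Z (2 * t) - Z t) - ∫ s in t..(2 * t), (Z' s - Z' t) := by
        rw [hid]; abel
      calc t * ‖Z' t‖ = ‖t • Z' t‖ := by
            rw [norm_smul, Real.norm_of_nonneg ht0.le]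
        _ ≤ ‖Z (2 * t) - Z t‖ + ‖∫ s in t..(2 * t), (Z' s - Z' t)‖ := by
            rw [hrw]; exact norm_sub_le _ _
        _ ≤ (‖Z (2 * t)‖ + ‖Z t‖) + D * t ^ (m - 1 - q) * t * t :=
            add_le_add (norm_sub_le _ _) hnorm
        _ = ‖Z (2 * t)‖ + ‖Z t‖ + D * t ^ (m - 1 - q) * t * t := by ring
    -- estimate the Z-terms
    have hZt : ‖Z t‖ ≤ c * t ^ (-N:ℝ) := hc t ht
    have hZ2t : ‖Z (2 * t)‖ ≤ c * t ^ (-N:ℝ) := by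
      refine le_trans (hc (2 * t) h2t) ?_
      have : (2 * t) ^ (-N:ℝ) ≤ t ^ (-N:ℝ) :=
        Real.rpow_le_rpow_of_nonpos ht0 ht2t (by linarith)
      exact mul_le_mul_of_nonneg_left this hc0
    have hNm : t ^ (-N:ℝ) ≤ t ^ (m + 1 - q : ℝ) := by
      refine Real.rpow_le_rpow_of_exponent_le ht1 ?_
      have := neg_abs_le m
      rw [hNdef]; linarith
    have hpow : t ^ (m - 1 - q : ℝ) * t * t = t ^ (m + 1 - q : ℝ) := by
      rw [mul_assoc, show t * t = t ^ ((2:ℕ):ℝ) by rw [Real.rpow_natCast]; ring,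
        ← Real.rpow_add ht0]
      ring_nf
    have hfinal : t * ‖Z' t‖ ≤ (2 * c + D) * t ^ (m + 1 - q : ℝ) := by
      calc t * ‖Z' t‖ ≤ ‖Z (2 * t)‖ + ‖Z t‖ + D * t ^ (m - 1 - q) * t * t := hsmul
        _ ≤ c * t ^ (-N:ℝ) + c * t ^ (-N:ℝ) + D * t ^ (m + 1 - q : ℝ) := by
            have e3 : D * t ^ (m - 1 - q) * t * t = D * t ^ (m + 1 - q : ℝ) := by
              rw [← hpow]; ring
            rw [e3]
            exact add_le_add (add_le_add hZ2t hZt) le_rfl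
        _ ≤ c * t ^ (m + 1 - q : ℝ) + c * t ^ (m + 1 - q : ℝ) + D * t ^ (m + 1 - q : ℝ) := by
            gcongr
        _ = (2 * c + D) * t ^ (m + 1 - q : ℝ) := by ring
    -- divide by t
    have hdiv : t ^ (m + 1 - q : ℝ) = t ^ (m - q : ℝ) * t := by
      rw [← Real.rpow_add_one ht0.ne']; ring_nf
    refine (mul_le_mul_iff_left₀ ht0).1 ?_
    calc ‖Z' t‖ * t = t * ‖Z' t‖ := mul_comm _ _
      _ ≤ (2 * c + D) * t ^ (m + 1 - q : ℝ) := hfinal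
      _ = (2 * c + D) * t ^ (m - q : ℝ) * t := by rw [hdiv]; ring
  -- iterate
  have hiter : ∀ n : ℕ, ∃ M : ℝ, 0 ≤ M ∧
      ∀ t ∈ Set.Ici (1:ℝ), ‖Z' t‖ ≤ M * t ^ ((K - 2) / 2 - n * q) := by
    intro n
    induction n with
    | zero => simpa using hinit
    | succ n ih =>
      obtain ⟨M, hM0, hM⟩ := ih
      obtain ⟨M', hM'0, hM'⟩ := hstep _ M hM0 hM
      refine ⟨M', hM'0, fun t ht => ?_⟩
      have : ((K - 2) / 2 - (n : ℝ) * q) - q = (K - 2) / 2 - (n + 1 : ℕ) * q := by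
        push_cast; ring
      rw [← this]; exact hM' t ht
  -- conclusion
  intro t ht
  have ht1 : (1:ℝ) ≤ t := ht
  have ht0 : (0:ℝ) < t := lt_of_lt_of_le one_pos ht
  obtain ⟨n, hn⟩ := exists_nat_gt ((K + 1) / q)
  have hnq : K + 1 < n * q := by
    have := (div_lt_iff₀ hq).1 hn
    linarith
  obtain ⟨M, hM0, hM⟩ := hiter n
  set m₁ : ℝ := (K - 2) / 2 - n * q with hm₁
  obtain ⟨c, hc⟩ := hvanish (K + 1) (by linarith)
  have hc0 : 0 ≤ c := by
    have h := hc 1 Set.self_mem_Ici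
    rw [Real.one_rpow, mul_one] at h
    exact le_trans (norm_nonneg _) h
  -- key estimate for T ≥ t
  have key : ∀ T, 1 ≤ T → t ≤ T →
      t ^ K * F t ≤ c ^ 2 * T ^ (-(K + 2) : ℝ) + M ^ 2 * T ^ (K + 2 + 2 * m₁ : ℝ) := by
    intro T hT1 htT
    have hT0 : (0:ℝ) < T := lt_of_lt_of_le one_pos hT1
    refine le_trans (hmono_up t ht T hT1 htT) ?_
    have hZT : ‖Z T‖ ≤ c * T ^ (-(K + 1) : ℝ) := hc T hT1
    have hZ'T : ‖Z' T‖ ≤ M * T ^ (m₁ : ℝ) := hM T hT1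
    have hb1 : ‖Z T‖ ^ 2 ≤ c ^ 2 * (T ^ (-(K + 1) : ℝ)) ^ 2 := by
      have := mul_self_le_mul_self (norm_nonneg (Z T)) hZT
      calc ‖Z T‖ ^ 2 = ‖Z T‖ * ‖Z T‖ := sq ‖Z T‖
        _ ≤ (c * T ^ (-(K + 1) : ℝ)) * (c * T ^ (-(K + 1) : ℝ)) := this
        _ = c ^ 2 * (T ^ (-(K + 1) : ℝ)) ^ 2 := by ring
    have hb2 : ‖Z' T‖ ^ 2 ≤ M ^ 2 * (T ^ (m₁ : ℝ)) ^ 2 := by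
      have := mul_self_le_mul_self (norm_nonneg (Z' T)) hZ'T
      calc ‖Z' T‖ ^ 2 = ‖Z' T‖ * ‖Z' T‖ := sq ‖Z' T‖
        _ ≤ (M * T ^ (m₁ : ℝ)) * (M * T ^ (m₁ : ℝ)) := this
        _ = M ^ 2 * (T ^ (m₁ : ℝ)) ^ 2 := by ring
    have hTK : (0:ℝ) < T ^ K := Real.rpow_pos_of_pos hT0 K
    have e1 : T ^ K * (T ^ (-(K + 1) : ℝ)) ^ 2 = T ^ (-(K + 2) : ℝ) := by
      rw [← Real.rpow_natCast (T ^ (-(K + 1) : ℝ)) 2, ← Real.rpow_mul hT0.le,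
        ← Real.rpow_add hT0]
      congr 1; ring
    have e2 : T ^ K * (T ^ 2 * (T ^ (m₁ : ℝ)) ^ 2) = T ^ (K + 2 + 2 * m₁ : ℝ) := by
      rw [← Real.rpow_natCast (T ^ (m₁ : ℝ)) 2, ← Real.rpow_mul hT0.le,
        show (T:ℝ) ^ (2:ℕ) = T ^ ((2:ℕ):ℝ) by rw [Real.rpow_natCast],
        ← Real.rpow_add hT0, ← Real.rpow_add hT0]
      congr 1; ring
    calc T ^ K * F T = T ^ K * ‖Z T‖ ^ 2 + T ^ K * (T ^ 2 * ‖Z' T‖ ^ 2) := by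
          simp only [hF]; ring
      _ ≤ T ^ K * (c ^ 2 * (T ^ (-(K + 1) : ℝ)) ^ 2)
          + T ^ K * (T ^ 2 * (M ^ 2 * (T ^ (m₁ : ℝ)) ^ 2)) := by
          have h2 : (0:ℝ) ≤ T ^ 2 := by positivity
          refine add_le_add (mul_le_mul_of_nonneg_left hb1 hTK.le) ?_
          exact mul_le_mul_of_nonneg_left (mul_le_mul_of_nonneg_left hb2 h2) hTK.le
      _ = c ^ 2 * (T ^ K * (T ^ (-(K + 1) : ℝ)) ^ 2)
          + M ^ 2 * (T ^ K * (T ^ 2 * (T ^ (m₁ : ℝ)) ^ 2)) := by ring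
      _ = c ^ 2 * T ^ (-(K + 2) : ℝ) + M ^ 2 * T ^ (K + 2 + 2 * m₁ : ℝ) := by
          rw [e1, e2]
  -- the bound tends to zero
  have htends : Filter.Tendsto
      (fun T : ℝ => c ^ 2 * T ^ (-(K + 2) : ℝ) + M ^ 2 * T ^ (K + 2 + 2 * m₁ : ℝ))
      Filter.atTop (nhds 0) := by
    have h1 : Filter.Tendsto (fun T : ℝ => c ^ 2 * T ^ (-(K + 2) : ℝ))
        Filter.atTop (nhds 0) := by
      have := (tendsto_rpow_neg_atTop (by linarith : (0:ℝ) < K + 2)).const_mul (c ^ 2)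
      simpa using this
    have h2 : Filter.Tendsto (fun T : ℝ => M ^ 2 * T ^ (K + 2 + 2 * m₁ : ℝ))
        Filter.atTop (nhds 0) := by
      have hneg : (0:ℝ) < -(K + 2 + 2 * m₁) := by
        rw [hm₁]; linarith
      have := (tendsto_rpow_neg_atTop hneg).const_mul (M ^ 2)
      simp only [neg_neg] at this
      simpa using this
    simpa using h1.add h2
  have hle : t ^ K * F t ≤ 0 := by
    refine ge_of_tendsto htends ?_
    refine Filter.eventually_atTop.2 ⟨max t 1, fun T hT => ?_⟩
    exact key T (le_trans (le_max_right t 1) hT) (le_trans (le_max_left t 1) hT)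
  have hTK : (0:ℝ) < t ^ K := Real.rpow_pos_of_pos ht0 K
  have hF0 : F t ≤ 0 := by
    by_contra h
    push_neg at h
    exact absurd hle (not_le.2 (mul_pos hTK h))
  have hZt2 : ‖Z t‖ ^ 2 ≤ 0 := by
    have h1 : (0:ℝ) ≤ t ^ 2 * ‖Z' t‖ ^ 2 := by positivity
    have h2 : ‖Z t‖ ^ 2 + t ^ 2 * ‖Z' t‖ ^ 2 ≤ 0 := hF0
    linarith
  have h0 : ‖Z t‖ ^ 2 = 0 := le_antisymm hZt2 (sq_nonneg _)
  exact norm_eq_zero.1 (sq_eq_zero_iff.1 h0)
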